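/- arXiv:2009.09639 — 4 statements merged into one kernel-verified Lean document; each statement's English description precedes it below -/
import Mathlib

section
/- Let Σ be a finite set, κ : Σ → ℤ a function with κ(w) ≥ 1 for all w ∈ Σ, and I ⊆ Σ a subset admissible with respect to κ. Let σ : Σ → Σ be a bijection such that κ(I)(σ(w)) = κ(I)(w) for all w ∈ Σ. Then κ(σ(w)) = κ(w) for all w ∈ Σ and σ(I) = I. (This is the combinatorial content of the paper's assertion that, for admissible I, the field ℚ(κ(I)) equals the compositum ℚ(κ)·ℚ(I) of fixed fields under the Aut(ℂ)-action permuting Σ.) -/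
/-- Let `X` be a finite set (playing the role of Σ_𝔼), `κ : X → ℤ` with `κ w ≥ 1`,
and `I ⊆ X` admissible with respect to `κ` (the only `J` with `#J = #I` and
`κ(J) = κ(I)` is `J = I`, where `κ(I)(w) = 2 - κ w` for `w ∈ I` and `κ w` otherwise).
If a bijection `σ : X → X` satisfies `κ(I)(σ w) = κ(I)(w)` for all `w`, then
`κ (σ w) = κ w` for all `w` and `σ(I) = I`. -/
theorem admissible_fixed_field {X : Type*} [Fintype X] [DecidableEq X]
    (κ : X → ℤ) (hκ : ∀ w, 1 ≤ κ w)
    (I : Finset X)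
    (hadm : ∀ J : Finset X, J.card = I.card →
      (fun w => if w ∈ J then 2 - κ w else κ w)
        = (fun w => if w ∈ I then 2 - κ w else κ w) → J = I)
    (σ : Equiv.Perm X)
    (hσ : ∀ w, (if σ w ∈ I then 2 - κ (σ w) else κ (σ w))
            = (if w ∈ I then 2 - κ w else κ w)) :
    (∀ w, κ (σ w) = κ w) ∧ I.image σ = I := by
  have hfix : ∀ w, κ (σ w) = κ w := by
    intro w
    have h := hσ w
    have h1 := hκ w
    have h2 := hκ (σ w)
    by_cases hw : w ∈ I <;> by_cases hsw : σ w ∈ I <;>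
      simp [hw, hsw] at h <;> omega
  refine ⟨hfix, ?_⟩
  apply hadm
  · exact Finset.card_image_of_injective I σ.injective
  · funext w
    have h := hσ (σ.symm w)
    have hmem : w ∈ I.image σ ↔ σ.symm w ∈ I := by
      constructor
      · rintro hx
        obtain ⟨v, hv, rfl⟩ := Finset.mem_image.mp hx
        simpa using hv
      · intro hx
        exact Finset.mem_image.mpr ⟨σ.symm w, hx, by simp⟩
    have hk : κ (σ.symm w) = κ w := by
      have := hfix (σ.symm w); simp at this; omega
    simp only [Equiv.apply_symm_apply] at h
    by_cases hw : w ∈ I.image σ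
    · have : σ.symm w ∈ I := hmem.mp hw
      simp only [hw, this, if_true, hk] at h ⊢
      split_ifs at h ⊢ <;> omega
    · have : σ.symm w ∉ I := fun hx => hw (hmem.mpr hx)
      simp only [hw, this, if_false, hk] at h ⊢
      split_ifs at h ⊢ <;> omega
end

section
/- Fix integers ℓ₂ ≥ 1, ℓ₃ ≥ 1 and M ≥ 0, and let (c_{m₁,m₂})_{m₁+m₂=M} be rational numbers, not all zero, satisfying the lowering relations. Then Σ_{m₁+m₂=M} (−1)^{m₁} c_{m₁,m₂} ≠ 0. (This is the nonvanishing of the constant C(κ, m′) asserted in the paper's proofs of Theorem 4.6 and of the archimedean-period Lemma 5.3.) -/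
/-- A tuple `c` of rationals indexed by pairs `(m₁, m₂)` with `m₁ + m₂ = M`
satisfies the lowering relations if
`(a+1)(ℓ₂+a)·c_{a+1,b} + (b+1)(ℓ₃+b)·c_{a,b+1} = 0` whenever `a + b = M - 1`. -/
def LoweringRel (ℓ₂ ℓ₃ : ℤ) (M : ℕ) (c : ℕ → ℕ → ℚ) : Prop :=
  ∀ a b : ℕ, a + b + 1 = M →
    ((a : ℚ) + 1) * ((ℓ₂ : ℚ) + a) * c (a + 1) b
      + ((b : ℚ) + 1) * ((ℓ₃ : ℚ) + b) * c a (b + 1) = 0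

/-- (Nonvanishing of the constant `C(κ, m′)` in the paper.) If the rationals
`c_{m₁,m₂}` (indexed by `m₁ + m₂ = M`) satisfy the lowering relations and are not
all zero, then `Σ_{m₁+m₂=M} (−1)^{m₁} c_{m₁,m₂} ≠ 0`. -/
theorem alternating_sum_ne_zero (ℓ₂ ℓ₃ : ℤ) (hℓ₂ : 1 ≤ ℓ₂) (hℓ₃ : 1 ≤ ℓ₃) (M : ℕ)
    (c : ℕ → ℕ → ℚ) (hc : LoweringRel ℓ₂ ℓ₃ M c)
    (hne : ∃ a b : ℕ, a + b = M ∧ c a b ≠ 0) :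
    ∑ m₁ ∈ Finset.range (M + 1), (-1 : ℚ) ^ m₁ * c m₁ (M - m₁) ≠ 0 := by
  have hl2 : (1 : ℚ) ≤ (ℓ₂ : ℚ) := by exact_mod_cast hℓ₂
  have hl3 : (1 : ℚ) ≤ (ℓ₃ : ℚ) := by exact_mod_cast hℓ₃
  set t : ℕ → ℚ := fun m => (-1 : ℚ) ^ m * c m (M - m) with ht
  -- recursion with positive ratio
  have key : ∀ m, m < M → ∃ k : ℚ, 0 < k ∧ t (m + 1) = k * t m := by
    intro m hm
    have hrel := hc m (M - 1 - m) (by omega)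
    have e1 : M - 1 - m + 1 = M - m := by omega
    have e2 : M - (m + 1) = M - 1 - m := by omega
    rw [e1] at hrel
    have hD : ((m : ℚ) + 1) * ((ℓ₂ : ℚ) + m) ≠ 0 := by
      have : (0 : ℚ) ≤ (m : ℚ) := by positivity
      nlinarith
    refine ⟨((M - 1 - m : ℕ) + 1) * ((ℓ₃ : ℚ) + (M - 1 - m : ℕ)) /
      (((m : ℚ) + 1) * ((ℓ₂ : ℚ) + m)), ?_, ?_⟩
    · apply div_pos
      · have : (0 : ℚ) ≤ ((M - 1 - m : ℕ) : ℚ) := by positivity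
        nlinarith
      · have : (0 : ℚ) ≤ (m : ℚ) := by positivity
        nlinarith
    · rw [ht]
      simp only [e2]
      rw [div_mul_eq_mul_div, eq_div_iff hD]
      linear_combination (-(-1:ℚ)^m) * hrel
  -- all t m are positive multiples of t 0
  have main : ∀ m, ∃ P : ℚ, m ≤ M → 0 < P ∧ t m = P * t 0 := by
    intro m
    induction m with
    | zero => exact ⟨1, fun _ => ⟨one_pos, by ring⟩⟩
    | succ n ih =>
      obtain ⟨P, hP⟩ := ih
      by_cases hn : n + 1 ≤ M
      · obtain ⟨hP1, hP2⟩ := hP (by omega)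
        obtain ⟨k, hk, hkt⟩ := key n (by omega)
        exact ⟨k * P, fun _ => ⟨mul_pos hk hP1, by rw [hkt, hP2]; ring⟩⟩
      · exact ⟨1, fun h => absurd h hn⟩
  choose P hP using main
  -- t 0 ≠ 0
  obtain ⟨a, b, hab, hcab⟩ := hne
  have hta : t a ≠ 0 := by
    rw [ht]
    simp only
    have hba : M - a = b := by omega
    rw [hba]
    intro h
    rcases mul_eq_zero.1 h with h' | h'
    · exact (pow_ne_zero a (by norm_num : (-1:ℚ) ≠ 0)) h'
    · exact hcab h'
  obtain ⟨hPa, hPat⟩ := hP a (by omega)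
  have ht0 : t 0 ≠ 0 := by
    intro h; rw [hPat, h, mul_zero] at hta; exact hta rfl
  -- rewrite the sum
  have hsum : ∑ m₁ ∈ Finset.range (M + 1), (-1 : ℚ) ^ m₁ * c m₁ (M - m₁)
      = (∑ m₁ ∈ Finset.range (M + 1), P m₁) * t 0 := by
    rw [Finset.sum_mul]
    refine Finset.sum_congr rfl fun m hm => ?_
    have hmM : m ≤ M := by have := Finset.mem_range.1 hm; omega
    have := (hP m hmM).2
    rw [ht] at this
    exact this
  rw [hsum]
  have hPos : 0 < ∑ m₁ ∈ Finset.range (M + 1), P m₁ := by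
    apply Finset.sum_pos
    · intro m hm
      exact (hP m (by have := Finset.mem_range.1 hm; omega)).1
    · exact ⟨0, Finset.mem_range.2 (by omega)⟩
  exact mul_ne_zero (ne_of_gt hPos) ht0
end

section
/- Let ℓ′ ≥ 1, m′ ≥ 1, m₁ ≥ 0, m₂ ≥ 0 be integers, and set A = ℓ′ + m′ + m₁ + m₂ and B = m′ + m₁ + m₂. Then Σ_{j=0}^{m₁} (−4π)^j · binom(m₁, j) · ((ℓ′+m₁−1)!/(ℓ′+j−1)!) · ∫₀^∞ a^{A+j−1} e^{−4πa} da/a = (−1)^{m₁} · (4π)^{1−A} · (A−2)! · (B−1)! / (m′+m₂−1)!. (This identity is the analytic evaluation underlying Lemma 4.4 of the paper, which computes the archimedean local Rankin–Selberg zeta integral Z(W⁻_{(ℓ,r)}, X₊^{m₁}·W⁺_{(ℓ′,r′)}, X₊^{m₂}·f_{Φ^{[m′]},s}) at s = m in closed form as a product of Gamma values; here ℓ = ℓ′ + m′ + 2m₁ + 2m₂, and all Gamma values have been rewritten as factorials via Γ(n) = (n−1)!.) -/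
open MeasureTheory Real

open Finset in
private lemma aux_alt_sum : ∀ (n a b : ℕ), n ≤ b →
    ∑ j ∈ range (n+1), (-1:ℤ)^j * n.choose j * ((a+j).choose b : ℤ)
      = (-1)^n * (a.choose (b - n) : ℤ) := by
  intro n
  induction n with
  | zero => intro a b _; simp
  | succ n ih =>
    intro a b hb
    have hb' : n ≤ b := Nat.le_of_succ_le hb
    rw [Finset.sum_range_succ' (fun j => (-1:ℤ)^j * (n+1).choose j * ((a+j).choose b : ℤ)) (n+1)]
    have hsplit : ∀ j, (-1:ℤ)^(j+1) * ((n+1).choose (j+1)) * ((a+(j+1)).choose b : ℤ)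
        = -((-1)^j * n.choose j * (((a+1)+j).choose b : ℤ))
          - (-1)^j * (n.choose (j+1)) * (((a+1)+j).choose b : ℤ) := by
      intro j
      have h1 : a + (j+1) = (a+1) + j := by omega
      rw [h1, Nat.choose_succ_succ]
      push_cast
      ring
    rw [Finset.sum_congr rfl (fun j _ => hsplit j), Finset.sum_sub_distrib]
    have key2 : ∑ j ∈ range (n+1), (-1:ℤ)^j * (n.choose (j+1)) * (((a+1)+j).choose b : ℤ)
        = -(∑ j ∈ range (n+1), (-1:ℤ)^j * n.choose j * ((a+j).choose b : ℤ))
          + (a.choose b : ℤ) := by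
      rw [Finset.sum_range_succ]
      rw [Finset.sum_range_succ' (fun j => (-1:ℤ)^j * n.choose j * ((a+j).choose b : ℤ)) n]
      simp only [Nat.choose_succ_self, Nat.cast_zero, mul_zero, zero_mul, add_zero,
        Nat.choose_zero_right, Nat.cast_one, pow_zero, one_mul, mul_one, Nat.add_zero]
      have : ∀ j, (-1:ℤ)^j * (n.choose (j+1)) * (((a+1)+j).choose b : ℤ)
          = -((-1)^(j+1) * n.choose (j+1) * ((a+(j+1)).choose b : ℤ)) := by
        intro j
        have h1 : a + (j+1) = (a+1) + j := by omega
        rw [h1]; ring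
      rw [Finset.sum_congr rfl (fun j _ => this j), Finset.sum_neg_distrib]
      ring
    rw [Finset.sum_neg_distrib, ih (a+1) b hb', key2, ih a b hb']
    have hP : (a+1).choose (b-n) = a.choose (b - (n+1)) + a.choose (b-n) := by
      have h2 : b - n = (b - (n+1)) + 1 := by omega
      rw [h2, Nat.choose_succ_succ]
    rw [show b - n = (b - (n+1)) + 1 from by omega] at hP ⊢
    rw [hP]
    push_cast
    simp only [Nat.choose_zero_right, pow_zero, Nat.add_zero, Nat.cast_one, one_mul, mul_one]
    ring

open Finset in
private lemma aux_real_sum (K M n : ℕ) :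
    ∑ j ∈ Finset.range (n+1),
      (-1:ℝ)^j * (n.choose j : ℝ) * (((K+n).factorial : ℝ) / ((K+j).factorial : ℝ))
        * ((K+j+n+M).factorial : ℝ)
    = (-1:ℝ)^n * ((K+n+M).factorial : ℝ) * ((n+M).factorial : ℝ) / (M.factorial : ℝ) := by
  have hsumZ := aux_alt_sum n (K+n+M) (n+M) (Nat.le_add_right n M)
  rw [Nat.add_sub_cancel_left] at hsumZ
  have hsum : ∑ j ∈ range (n+1), (-1:ℝ)^j * (n.choose j : ℝ) * (((K+n+M)+j).choose (n+M) : ℝ)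
      = (-1:ℝ)^n * ((K+n+M).choose M : ℝ) := by
    exact_mod_cast congrArg (fun z : ℤ => (z : ℝ)) hsumZ
  have hterm : ∀ j, (-1:ℝ)^j * (n.choose j : ℝ) * (((K+n).factorial : ℝ) / ((K+j).factorial : ℝ))
        * ((K+j+n+M).factorial : ℝ)
      = ((K+n).factorial : ℝ) * ((n+M).factorial : ℝ)
        * ((-1:ℝ)^j * (n.choose j : ℝ) * (((K+n+M)+j).choose (n+M) : ℝ)) := by
    intro j
    have h1 : K+j+n+M = (K+j)+(n+M) := by omega
    have h2 : (K+n+M)+j = (K+j)+(n+M) := by omega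
    have h3 := Nat.add_choose_mul_factorial_mul_factorial (K+j) (n+M)
    have h4 : (((K+j)+(n+M)).factorial : ℝ)
        = (((K+j)+(n+M)).choose (n+M) : ℝ) * ((K+j).factorial : ℝ) * ((n+M).factorial : ℝ) := by
      exact_mod_cast congrArg (fun z : ℕ => (z : ℝ)) h3.symm
    have hKj : ((K+j).factorial : ℝ) ≠ 0 := Nat.cast_ne_zero.mpr (Nat.factorial_ne_zero _)
    rw [h1, h2, h4]
    field_simp
  rw [Finset.sum_congr rfl (fun j _ => hterm j), ← Finset.mul_sum, hsum]
  have h5 := Nat.add_choose_mul_factorial_mul_factorial (K+n) M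
  have h6 : (((K+n)+M).choose M : ℝ) * ((K+n).factorial : ℝ) * (M.factorial : ℝ)
      = (((K+n)+M).factorial : ℝ) := by exact_mod_cast h5
  have hM : (M.factorial : ℝ) ≠ 0 := Nat.cast_ne_zero.mpr (Nat.factorial_ne_zero _)
  rw [eq_div_iff hM]
  linear_combination ((-1:ℝ)^n * ((n+M).factorial : ℝ)) * h6

private lemma aux_integral (k : ℕ) :
    ∫ a in Set.Ioi (0:ℝ), a ^ k * Real.exp (-4 * π * a)
      = (k.factorial : ℝ) / (4*π)^(k+1) := by
  have hπ : (0:ℝ) < 4*π := by positivity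
  have h := Real.integral_rpow_mul_exp_neg_mul_Ioi (a := (k:ℝ)+1) (by positivity) hπ
  rw [show ((k:ℝ)+1-1) = (k:ℝ) from by ring] at h
  rw [Real.Gamma_nat_eq_factorial] at h
  have hcongr : ∫ a in Set.Ioi (0:ℝ), a ^ k * Real.exp (-4 * π * a)
      = ∫ t in Set.Ioi (0:ℝ), t ^ (k:ℝ) * Real.exp (-(4*π*t)) := by
    refine setIntegral_congr_fun measurableSet_Ioi (fun t ht => ?_)
    rw [Real.rpow_natCast]
    ring_nf
  rw [hcongr, h, show ((k:ℝ)+1) = ((k+1 : ℕ) : ℝ) from by push_cast; ring,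
    Real.rpow_natCast]
  rw [div_pow, one_pow, one_div, div_eq_mul_inv, mul_comm]

/-- (Analytic evaluation underlying Lemma 4.4 of the paper.)
For integers `ℓ′, m′ ≥ 1` and `m₁, m₂ ≥ 0`, with `A = ℓ′ + m′ + m₁ + m₂` and
`B = m′ + m₁ + m₂`, one has
`Σ_{j=0}^{m₁} (−4π)^j · C(m₁,j) · (ℓ′+m₁−1)!/(ℓ′+j−1)! · ∫₀^∞ a^{A+j−1} e^{−4πa} da/a
  = (−1)^{m₁} (4π)^{1−A} (A−2)! (B−1)! / (m′+m₂−1)!`. -/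
theorem archimedean_zeta_integral (ℓ' m' m₁ m₂ : ℕ) (hℓ' : 1 ≤ ℓ') (hm' : 1 ≤ m') :
    (∑ j ∈ Finset.range (m₁ + 1),
      (-4 * π) ^ j * (m₁.choose j : ℝ) *
        (((ℓ' + m₁ - 1).factorial : ℝ) / ((ℓ' + j - 1).factorial : ℝ)) *
        ∫ a in Set.Ioi (0 : ℝ),
          a ^ (ℓ' + m' + m₁ + m₂ + j - 1) * Real.exp (-4 * π * a) / a)
    = (-1 : ℝ) ^ m₁ * (4 * π) ^ (1 - (ℓ' + m' + m₁ + m₂ : ℤ)) *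
        ((ℓ' + m' + m₁ + m₂ - 2).factorial : ℝ) *
        ((m' + m₁ + m₂ - 1).factorial : ℝ) / ((m' + m₂ - 1).factorial : ℝ) := by
  obtain ⟨K, rfl⟩ := Nat.exists_eq_add_of_le hℓ'
  obtain ⟨m'', rfl⟩ := Nat.exists_eq_add_of_le hm'
  have hπ : (0:ℝ) < 4*π := by positivity
  have hπ' : (4*π:ℝ) ≠ 0 := hπ.ne'
  have hint : ∀ j, (∫ a in Set.Ioi (0:ℝ),
        a ^ (1+K + (1+m'') + m₁ + m₂ + j - 1) * Real.exp (-4 * π * a) / a)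
      = ((K+j+m₁+(m''+m₂)).factorial : ℝ) / (4*π)^(K+j+m₁+(m''+m₂)+1) := by
    intro j
    rw [show 1+K+(1+m'')+m₁+m₂+j-1 = (K+j+m₁+(m''+m₂)) + 1 from by omega]
    have hcong : (∫ a in Set.Ioi (0:ℝ),
          a ^ ((K+j+m₁+(m''+m₂))+1) * Real.exp (-4*π*a) / a)
        = ∫ a in Set.Ioi (0:ℝ), a ^ (K+j+m₁+(m''+m₂)) * Real.exp (-4*π*a) := by
      refine setIntegral_congr_fun measurableSet_Ioi (fun a ha => ?_)
      have ha0 : a ≠ 0 := ne_of_gt ha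
      rw [pow_succ]
      field_simp
    rw [hcong, aux_integral]
  have hterm : ∀ j, (-4*π)^j * (m₁.choose j : ℝ) *
        (((1+K + m₁ - 1).factorial : ℝ) / ((1+K + j - 1).factorial : ℝ)) *
        (((K+j+m₁+(m''+m₂)).factorial : ℝ) / (4*π)^(K+j+m₁+(m''+m₂)+1))
      = (4*π) ^ (1 - ((1+K : ℕ) + (1+m'' : ℕ) + (m₁:ℕ) + (m₂:ℕ) : ℤ)) *
        ((-1:ℝ)^j * (m₁.choose j : ℝ)
          * (((K+m₁).factorial : ℝ)/((K+j).factorial : ℝ))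
          * ((K+j+m₁+(m''+m₂)).factorial : ℝ)) := by
    intro j
    rw [show 1+K+m₁-1 = K+m₁ from by omega, show 1+K+j-1 = K+j from by omega]
    have hneg : (-4*π:ℝ)^j = (-1:ℝ)^j * (4*π)^j := by
      rw [show (-4*π:ℝ) = -1 * (4*π) from by ring, mul_pow]
    have hzp : ((4*π:ℝ))^j / (4*π)^(K+j+m₁+(m''+m₂)+1)
        = (4*π) ^ (1 - ((1+K : ℕ) + (1+m'' : ℕ) + (m₁:ℕ) + (m₂:ℕ) : ℤ)) := by
      rw [← zpow_natCast (4*π:ℝ) j, ← zpow_natCast (4*π:ℝ) (K+j+m₁+(m''+m₂)+1),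
        ← zpow_sub₀ hπ']
      congr 1
      push_cast
      ring
    rw [hneg, ← hzp]
    field_simp
  calc (∑ j ∈ Finset.range (m₁ + 1),
      (-4 * π) ^ j * (m₁.choose j : ℝ) *
        (((1+K + m₁ - 1).factorial : ℝ) / ((1+K + j - 1).factorial : ℝ)) *
        ∫ a in Set.Ioi (0 : ℝ),
          a ^ (1+K + (1+m'') + m₁ + m₂ + j - 1) * Real.exp (-4 * π * a) / a)
      = ∑ j ∈ Finset.range (m₁ + 1),
        (4*π) ^ (1 - ((1+K : ℕ) + (1+m'' : ℕ) + (m₁:ℕ) + (m₂:ℕ) : ℤ)) *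
        ((-1:ℝ)^j * (m₁.choose j : ℝ)
          * (((K+m₁).factorial : ℝ)/((K+j).factorial : ℝ))
          * ((K+j+m₁+(m''+m₂)).factorial : ℝ)) := by
        refine Finset.sum_congr rfl fun j _ => ?_
        rw [hint j, hterm j]
    _ = (4*π) ^ (1 - ((1+K : ℕ) + (1+m'' : ℕ) + (m₁:ℕ) + (m₂:ℕ) : ℤ)) *
        ∑ j ∈ Finset.range (m₁ + 1),
        ((-1:ℝ)^j * (m₁.choose j : ℝ)
          * (((K+m₁).factorial : ℝ)/((K+j).factorial : ℝ))
          * ((K+j+m₁+(m''+m₂)).factorial : ℝ)) := by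
        rw [Finset.mul_sum]
    _ = (-1 : ℝ) ^ m₁ * (4 * π) ^ (1 - ((1+K : ℕ) + (1+m'' : ℕ) + (m₁:ℕ) + (m₂:ℕ) : ℤ)) *
        ((1+K + (1+m'') + m₁ + m₂ - 2).factorial : ℝ) *
        ((1+m'' + m₁ + m₂ - 1).factorial : ℝ) / ((1+m'' + m₂ - 1).factorial : ℝ) := by
        rw [aux_real_sum K (m''+m₂) m₁,
          show 1+K+(1+m'')+m₁+m₂-2 = K+m₁+(m''+m₂) from by omega,
          show 1+m''+m₁+m₂-1 = m₁+(m''+m₂) from by omega,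
          show 1+m''+m₂-1 = m''+m₂ from by omega]
        ring
end

section
/- Let k be a field of characteristic zero, L a Lie algebra over k, and V, W Lie modules over L. Let e, f, h ∈ L satisfy ⁅h, e⁆ = 2•e and ⁅e, f⁆ = −4•h. Let ℓ₂ ≥ 1 and ℓ₃ ≥ 1 be integers, and let v ∈ V and w ∈ W satisfy h·v = ℓ₂•v, f·v = 0, h·w = ℓ₃•w, f·w = 0. Let ℓ₁ be an integer with ℓ₁ ≥ ℓ₂ + ℓ₃ and ℓ₁ ≡ ℓ₂ + ℓ₃ (mod 2), and set M = (ℓ₁ − ℓ₂ − ℓ₃)/2. Then there exist rational numbers c_{m₁,m₂} (indexed by nonnegative integers m₁, m₂ with m₁ + m₂ = M), not all zero, such that the element u = Σ_{m₁+m₂=M} c_{m₁,m₂} • (e^{m₁}·v ⊗ e^{m₂}·w) of V ⊗ W satisfies h·u = ℓ₁•u and f·u = 0. (This is the existence half of Lemma 3.1 of the paper, with no hypothesis of linear independence; it produces the ℚ-rational trilinear differential operator used in Proposition 3.2.) -/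
open scoped TensorProduct


section
variable {k : Type*} [Field k] [CharZero k]
    {L : Type*} [LieRing L] [LieAlgebra k L]
    {V : Type*} [AddCommGroup V] [Module k V] [LieRingModule L V] [LieModule k L V]

theorem h_iter (e h : L) (hhe : ⁅h, e⁆ = (2 : k) • e) (lam : k)
    (v : V) (hhv : ⁅h, v⁆ = lam • v) (m : ℕ) :
    ⁅h, (fun x => ⁅e, x⁆)^[m] v⁆ = (lam + 2 * m) • (fun x => ⁅e, x⁆)^[m] v := by
  induction m with
  | zero => simpa using hhv
  | succ n ih =>
    rw [Function.iterate_succ_apply']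
    rw [leibniz_lie h e, ih, hhe, lie_smul, smul_lie]
    push_cast
    module

theorem f_iter (e f h : L) (hhe : ⁅h, e⁆ = (2 : k) • e) (hef : ⁅e, f⁆ = (-4 : k) • h)
    (lam : k) (v : V) (hhv : ⁅h, v⁆ = lam • v) (hfv : ⁅f, v⁆ = 0) (m : ℕ) :
    ⁅f, (fun x => ⁅e, x⁆)^[m + 1] v⁆
      = (4 * (m + 1) * (lam + m)) • (fun x => ⁅e, x⁆)^[m] v := by
  have hfe : ⁅f, e⁆ = (4 : k) • h := by rw [← lie_skew, hef]; module
  induction m with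
  | zero =>
    simp only [Function.iterate_succ_apply', Function.iterate_zero_apply]
    rw [leibniz_lie f e, hfv, lie_zero, add_zero, hfe, smul_lie, hhv]
    push_cast
    module
  | succ n ih =>
    rw [show (fun x => ⁅e, x⁆)^[n+1+1] v = ⁅e, (fun x => ⁅e, x⁆)^[n+1] v⁆ from
      Function.iterate_succ_apply' _ _ _]
    rw [leibniz_lie f e, ih, hfe, smul_lie, lie_smul,
      h_iter e h hhe lam v hhv (n+1),
      show (fun x => ⁅e, x⁆)^[n+1] v = ⁅e, (fun x => ⁅e, x⁆)^[n] v⁆ from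
        Function.iterate_succ_apply' _ _ _]
    push_cast
    module
end

theorem my_lie_sum {L : Type*} [LieRing L] {V : Type*} [AddCommGroup V] [LieRingModule L V]
    {ι : Type*} (x : L) (s : Finset ι) (g : ι → V) :
    ⁅x, ∑ i ∈ s, g i⁆ = ∑ i ∈ s, ⁅x, g i⁆ :=
  map_sum (AddMonoidHom.mk' (fun m => ⁅x, m⁆) (lie_add x)) g s

noncomputable def myCoeff (l2 l3 : ℤ) : ℕ → ℕ → ℚ := fun a b =>
  (-1) ^ a / ((a.factorial * b.factorial : ℚ) *
    (∏ j ∈ Finset.range a, ((l2 : ℚ) + j)) * (∏ j ∈ Finset.range b, ((l3 : ℚ) + j)))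

theorem myCoeff_ne_zero (l2 l3 : ℤ) (h2 : 1 ≤ l2) (h3 : 1 ≤ l3) (a b : ℕ) :
    myCoeff l2 l3 a b ≠ 0 := by
  have p2 : (∏ j ∈ Finset.range a, ((l2 : ℚ) + j)) ≠ 0 := by
    apply Finset.prod_ne_zero_iff.2
    intro j _
    have : (1 : ℚ) ≤ (l2 : ℚ) := by exact_mod_cast h2
    positivity
  have p3 : (∏ j ∈ Finset.range b, ((l3 : ℚ) + j)) ≠ 0 := by
    apply Finset.prod_ne_zero_iff.2
    intro j _
    have : (1 : ℚ) ≤ (l3 : ℚ) := by exact_mod_cast h3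
    positivity
  have fa : (a.factorial : ℚ) ≠ 0 := by exact_mod_cast a.factorial_ne_zero
  have fb : (b.factorial : ℚ) ≠ 0 := by exact_mod_cast b.factorial_ne_zero
  unfold myCoeff
  apply div_ne_zero
  · positivity
  · exact mul_ne_zero (mul_ne_zero (mul_ne_zero fa fb) p2) p3

theorem myCoeff_rec (l2 l3 : ℤ) (h2 : 1 ≤ l2) (h3 : 1 ≤ l3) (a b : ℕ) :
    myCoeff l2 l3 (a + 1) b * (4 * (a + 1) * ((l2 : ℚ) + a))
      + myCoeff l2 l3 a (b + 1) * (4 * (b + 1) * ((l3 : ℚ) + b)) = 0 := by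
  have p2 : (∏ j ∈ Finset.range a, ((l2 : ℚ) + j)) ≠ 0 := by
    apply Finset.prod_ne_zero_iff.2
    intro j _
    have : (1 : ℚ) ≤ (l2 : ℚ) := by exact_mod_cast h2
    positivity
  have p3 : (∏ j ∈ Finset.range b, ((l3 : ℚ) + j)) ≠ 0 := by
    apply Finset.prod_ne_zero_iff.2
    intro j _
    have : (1 : ℚ) ≤ (l3 : ℚ) := by exact_mod_cast h3
    positivity
  have fa : (a.factorial : ℚ) ≠ 0 := by exact_mod_cast a.factorial_ne_zero
  have fb : (b.factorial : ℚ) ≠ 0 := by exact_mod_cast b.factorial_ne_zero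
  have q2 : ((l2 : ℚ) + a) ≠ 0 := by
    have : (1 : ℚ) ≤ (l2 : ℚ) := by exact_mod_cast h2
    positivity
  have q3 : ((l3 : ℚ) + b) ≠ 0 := by
    have : (1 : ℚ) ≤ (l3 : ℚ) := by exact_mod_cast h3
    positivity
  have ha1 : ((a : ℚ) + 1) ≠ 0 := by positivity
  have hb1 : ((b : ℚ) + 1) ≠ 0 := by positivity
  unfold myCoeff
  rw [Finset.prod_range_succ, Finset.prod_range_succ, Nat.factorial_succ, Nat.factorial_succ]
  push_cast
  field_simp
  ring


/-- The linear combination `Σ_{m₁+m₂=M} c_{m₁,m₂} • (e^{m₁}·v ⊗ e^{m₂}·w)` in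
`V ⊗ W`, for a family of rational coefficients `c`. -/
noncomputable def ratTensorComb (k : Type*) [Field k]
    {L : Type*} [LieRing L] [LieAlgebra k L]
    {V : Type*} [AddCommGroup V] [Module k V] [LieRingModule L V]
    {W : Type*} [AddCommGroup W] [Module k W] [LieRingModule L W]
    (e : L) (v : V) (w : W) (M : ℕ) (c : ℕ → ℕ → ℚ) : V ⊗[k] W :=
  ∑ i ∈ Finset.range (M + 1), ((c i (M - i) : ℚ) : k) •
    (((fun x => ⁅e, x⁆)^[i] v) ⊗ₜ[k] ((fun x => ⁅e, x⁆)^[M - i] w))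

/-- (Existence half of Lemma 3.1 of the paper.)  Let `L` be a Lie algebra over a
field `k` of characteristic zero acting on Lie modules `V`, `W`, with
`⁅h, e⁆ = 2•e` and `⁅e, f⁆ = −4•h`, and let `v`, `w` be `h`-eigenvectors of
eigenvalues `ℓ₂, ℓ₃ ≥ 1` killed by `f`.  If `ℓ₁ ≥ ℓ₂ + ℓ₃`,
`ℓ₁ ≡ ℓ₂ + ℓ₃ (mod 2)`, and `M = (ℓ₁ − ℓ₂ − ℓ₃)/2`, then there exist rational
numbers `c_{m₁,m₂}` (`m₁ + m₂ = M`), not all zero, such that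
`u = Σ c_{m₁,m₂} • (e^{m₁}·v ⊗ e^{m₂}·w)` satisfies `h·u = ℓ₁•u` and `f·u = 0`. -/
theorem trilinear_operator_exists {k : Type*} [Field k] [CharZero k]
    {L : Type*} [LieRing L] [LieAlgebra k L]
    {V : Type*} [AddCommGroup V] [Module k V] [LieRingModule L V] [LieModule k L V]
    {W : Type*} [AddCommGroup W] [Module k W] [LieRingModule L W] [LieModule k L W]
    (e f h : L) (hhe : ⁅h, e⁆ = (2 : k) • e) (hef : ⁅e, f⁆ = (-4 : k) • h)
    (ℓ₁ ℓ₂ ℓ₃ : ℤ) (hℓ₂ : 1 ≤ ℓ₂) (hℓ₃ : 1 ≤ ℓ₃)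
    (hge : ℓ₂ + ℓ₃ ≤ ℓ₁) (hpar : ℓ₁ % 2 = (ℓ₂ + ℓ₃) % 2)
    (v : V) (w : W)
    (hhv : ⁅h, v⁆ = ((ℓ₂ : ℤ) : k) • v) (hfv : ⁅f, v⁆ = 0)
    (hhw : ⁅h, w⁆ = ((ℓ₃ : ℤ) : k) • w) (hfw : ⁅f, w⁆ = 0) :
    ∃ c : ℕ → ℕ → ℚ,
      (∃ a b : ℕ, a + b = ((ℓ₁ - ℓ₂ - ℓ₃) / 2).toNat ∧ c a b ≠ 0) ∧
      ⁅h, ratTensorComb k e v w ((ℓ₁ - ℓ₂ - ℓ₃) / 2).toNat c⁆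
        = ((ℓ₁ : ℤ) : k) • ratTensorComb k e v w ((ℓ₁ - ℓ₂ - ℓ₃) / 2).toNat c ∧
      ⁅f, ratTensorComb k e v w ((ℓ₁ - ℓ₂ - ℓ₃) / 2).toNat c⁆ = 0 := by
  set M : ℕ := ((ℓ₁ - ℓ₂ - ℓ₃) / 2).toNat with hMdef
  have hM : ℓ₁ = ℓ₂ + ℓ₃ + 2 * (M : ℤ) := by omega
  refine ⟨myCoeff ℓ₂ ℓ₃, ⟨0, M, (zero_add M), myCoeff_ne_zero ℓ₂ ℓ₃ hℓ₂ hℓ₃ 0 M⟩, ?_, ?_⟩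
  · -- h-eigenvector part
    simp only [ratTensorComb]
    rw [my_lie_sum, Finset.smul_sum]
    refine Finset.sum_congr rfl fun i hi => ?_
    have hi' : i ≤ M := Nat.lt_succ_iff.1 (Finset.mem_range.1 hi)
    rw [lie_smul, TensorProduct.LieModule.lie_tmul_right,
      h_iter e h hhe _ v hhv i, h_iter e h hhe _ w hhw (M - i),
      ← TensorProduct.smul_tmul', TensorProduct.tmul_smul, ← add_smul,
      smul_smul, smul_smul]
    congr 1
    have hz : (ℓ₂ : ℤ) + 2 * (i : ℤ) + ((ℓ₃ : ℤ) + 2 * ((M - i : ℕ) : ℤ)) = ℓ₁ := by omega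
    have hzk : ((ℓ₂ : ℤ) : k) + 2 * (i : k) + (((ℓ₃ : ℤ) : k) + 2 * ((M - i : ℕ) : k))
        = ((ℓ₁ : ℤ) : k) := by exact_mod_cast hz
    linear_combination ((myCoeff ℓ₂ ℓ₃ i (M - i) : ℚ) : k) * hzk
  · -- killed by f
    simp only [ratTensorComb]
    rw [my_lie_sum]
    have step : ∀ i ∈ Finset.range (M + 1),
        ⁅f, ((myCoeff ℓ₂ ℓ₃ i (M - i) : ℚ) : k) •
          (((fun x => ⁅e, x⁆)^[i] v) ⊗ₜ[k] ((fun x => ⁅e, x⁆)^[M - i] w))⁆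
        = ((myCoeff ℓ₂ ℓ₃ i (M - i) : ℚ) : k) •
            (⁅f, (fun x => ⁅e, x⁆)^[i] v⁆ ⊗ₜ[k] ((fun x => ⁅e, x⁆)^[M - i] w))
          + ((myCoeff ℓ₂ ℓ₃ i (M - i) : ℚ) : k) •
            (((fun x => ⁅e, x⁆)^[i] v) ⊗ₜ[k] ⁅f, (fun x => ⁅e, x⁆)^[M - i] w⁆) := by
      intro i _
      rw [lie_smul, TensorProduct.LieModule.lie_tmul_right, smul_add]
    rw [Finset.sum_congr rfl step, Finset.sum_add_distrib]
    have hA : (∑ i ∈ Finset.range (M + 1), ((myCoeff ℓ₂ ℓ₃ i (M - i) : ℚ) : k) •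
          (⁅f, (fun x => ⁅e, x⁆)^[i] v⁆ ⊗ₜ[k] ((fun x => ⁅e, x⁆)^[M - i] w)))
        = ∑ j ∈ Finset.range M,
            (((myCoeff ℓ₂ ℓ₃ (j + 1) (M - 1 - j) : ℚ) : k) *
              (4 * ((j : k) + 1) * (((ℓ₂ : ℤ) : k) + (j : k)))) •
            (((fun x => ⁅e, x⁆)^[j] v) ⊗ₜ[k] ((fun x => ⁅e, x⁆)^[M - 1 - j] w)) := by
      rw [Finset.sum_range_succ']
      simp only [Function.iterate_zero_apply, hfv, TensorProduct.zero_tmul, smul_zero, add_zero]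
      refine Finset.sum_congr rfl fun j hj => ?_
      have hj' : j < M := Finset.mem_range.1 hj
      have e1 : M - (j + 1) = M - 1 - j := by omega
      rw [e1, f_iter e f h hhe hef _ v hhv hfv j, ← TensorProduct.smul_tmul', smul_smul]
    have hB : (∑ i ∈ Finset.range (M + 1), ((myCoeff ℓ₂ ℓ₃ i (M - i) : ℚ) : k) •
          (((fun x => ⁅e, x⁆)^[i] v) ⊗ₜ[k] ⁅f, (fun x => ⁅e, x⁆)^[M - i] w⁆))
        = ∑ j ∈ Finset.range M,
            (((myCoeff ℓ₂ ℓ₃ j (M - 1 - j + 1) : ℚ) : k) *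
              (4 * (((M - 1 - j : ℕ) : k) + 1) * (((ℓ₃ : ℤ) : k) + ((M - 1 - j : ℕ) : k)))) •
            (((fun x => ⁅e, x⁆)^[j] v) ⊗ₜ[k] ((fun x => ⁅e, x⁆)^[M - 1 - j] w)) := by
      rw [Finset.sum_range_succ]
      simp only [Nat.sub_self, Function.iterate_zero_apply, hfw, TensorProduct.tmul_zero,
        smul_zero, add_zero]
      refine Finset.sum_congr rfl fun j hj => ?_
      have hj' : j < M := Finset.mem_range.1 hj
      have e1 : M - j = M - 1 - j + 1 := by omega
      rw [e1, f_iter e f h hhe hef _ w hhw hfw (M - 1 - j), TensorProduct.tmul_smul, smul_smul]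
    rw [hA, hB, ← Finset.sum_add_distrib]
    refine Finset.sum_eq_zero fun j hj => ?_
    rw [← add_smul]
    have key := myCoeff_rec ℓ₂ ℓ₃ hℓ₂ hℓ₃ j (M - 1 - j)
    have keyk := congrArg (fun q : ℚ => (q : k)) key
    push_cast at keyk
    have keyk' : ((myCoeff ℓ₂ ℓ₃ (j + 1) (M - 1 - j) : ℚ) : k) *
          (4 * ((j : k) + 1) * (((ℓ₂ : ℤ) : k) + (j : k)))
        + ((myCoeff ℓ₂ ℓ₃ j (M - 1 - j + 1) : ℚ) : k) *
          (4 * (((M - 1 - j : ℕ) : k) + 1) * (((ℓ₃ : ℤ) : k) + ((M - 1 - j : ℕ) : k)))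
        = 0 := by linear_combination keyk
    rw [keyk', zero_smul]
end
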